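/- Let (X,d) be a complete metric space and T,S : X → X mappings such that T is continuous, injective, and subsequentially convergent. If there exists λ ∈ [0, 1/2) such that d(T(S x), T(S y)) ≤ λ·(d(T x, T(S x)) + d(T y, T(S y))) for all x, y ∈ X, then S has a unique fixed point. -/

import Mathlib

open Filter Topology

theorem extended_kannan_fixed_point
    {X : Type*} [MetricSpace X] [CompleteSpace X] [Nonempty X]
    (T S : X → X)
    (hTc : Continuous T) (hTi : Function.Injective T)
    (hTsub : ∀ y : ℕ → X, (∃ L : X, Tendsto (fun n => T (y n)) atTop (𝓝 L)) →
      ∃ (z : X) (φ : ℕ → ℕ), StrictMono φ ∧ Tendsto (fun k => y (φ k)) atTop (𝓝 z))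
    (lam : ℝ) (hlam0 : 0 ≤ lam) (hlam : lam < 1/2)
    (h : ∀ x y : X, dist (T (S x)) (T (S y)) ≤
      lam * (dist (T x) (T (S x)) + dist (T y) (T (S y)))) :
    ∃! u : X, S u = u := by
  obtain ⟨x₀⟩ := ‹Nonempty X›
  set x : ℕ → X := fun n => S^[n] x₀ with hx
  have hxs : ∀ n, x (n + 1) = S (x n) := by
    intro n; simp [hx, Function.iterate_succ_apply']
  set a : ℕ → ℝ := fun n => dist (T (x n)) (T (x (n + 1))) with ha
  have h1lam : (0:ℝ) < 1 - lam := by linarith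
  set r : ℝ := lam / (1 - lam) with hr
  have hr0 : 0 ≤ r := div_nonneg hlam0 h1lam.le
  have hr1 : r < 1 := by
    rw [hr, div_lt_one h1lam]; linarith
  have hstep : ∀ n, a (n + 1) ≤ r * a n := by
    intro n
    have := h (x n) (x (n + 1))
    rw [← hxs n, ← hxs (n + 1)] at this
    have h2 : a (n + 1) ≤ lam * (a n + a (n + 1)) := this
    rw [hr, div_mul_eq_mul_div, le_div_iff₀ h1lam]
    nlinarith [dist_nonneg (α := X) (x := T (x (n+1))) (y := T (x (n+2)))]
  have hgeo : ∀ n, a n ≤ a 0 * r ^ n := by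
    intro n
    induction n with
    | zero => simp
    | succ k ih =>
      calc a (k + 1) ≤ r * a k := hstep k
        _ ≤ r * (a 0 * r ^ k) := by
            exact mul_le_mul_of_nonneg_left ih hr0
        _ = a 0 * r ^ (k + 1) := by ring
  have hcauchy : CauchySeq (fun n => T (x n)) :=
    cauchySeq_of_le_geometric r (a 0) hr1 (fun n => by
      simpa [mul_comm] using hgeo n)
  obtain ⟨L, hL⟩ := cauchySeq_tendsto_of_complete hcauchy
  obtain ⟨z, φ, hφ, hz⟩ := hTsub x ⟨L, hL⟩
  have hTz : Tendsto (fun k => T (x (φ k))) atTop (𝓝 (T z)) :=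
    (hTc.tendsto z).comp hz
  have hTzL : T z = L :=
    tendsto_nhds_unique hTz (hL.comp hφ.tendsto_atTop)
  -- a n → 0
  have ha0 : Tendsto a atTop (𝓝 0) := by
    have h2 : Tendsto (fun n => a 0 * r ^ n) atTop (𝓝 0) := by
      simpa using (tendsto_pow_atTop_nhds_zero_of_lt_one hr0 hr1).const_mul (a 0)
    exact squeeze_zero (fun n => dist_nonneg) hgeo h2
  -- show S z = z
  have key : dist (T (S z)) (T z) ≤ lam * dist (T z) (T (S z)) := by
    have hf : Tendsto (fun n => dist (T (S z)) (T (x (n + 1)))) atTop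
        (𝓝 (dist (T (S z)) (T z))) := by
      have : Tendsto (fun n => T (x (n + 1))) atTop (𝓝 (T z)) := by
        rw [hTzL]
        exact hL.comp (tendsto_add_atTop_nat 1)
      exact (tendsto_const_nhds.dist this)
    have hg : Tendsto (fun n => lam * (dist (T z) (T (S z)) + a n)) atTop
        (𝓝 (lam * dist (T z) (T (S z)))) := by
      have := (tendsto_const_nhds (x := dist (T z) (T (S z))) (f := atTop (α := ℕ))).add ha0
      simpa using this.const_mul lam
    refine le_of_tendsto_of_tendsto' hf hg ?_
    intro n
    have := h z (x n)
    rw [← hxs n] at this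
    exact this
  have hdz : dist (T (S z)) (T z) = 0 := by
    have hsymm : dist (T z) (T (S z)) = dist (T (S z)) (T z) := dist_comm _ _
    rw [hsymm] at key
    nlinarith [dist_nonneg (α := X) (x := T (S z)) (y := T z)]
  have hSz : S z = z := hTi (by rwa [← dist_eq_zero])
  refine ⟨z, hSz, ?_⟩
  intro u hu
  have := h u z
  rw [hu, hSz] at this
  simp at this
  exact hTi this
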